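/- Let γ ∈ [0,1), let r_min ≤ r_max be real numbers, and set R_max := (r_max − r_min)/(1 − γ). Let Π be a nonempty set, and for each π ∈ Π and each i ∈ ℕ let H_i be a measurable space, let P^π_i and Q^π_i be probability measures on H_i, and let r_i : H_{i+1} → ℝ be a measurable function with r_min ≤ r_i ≤ r_max. Define J_P(π) := ∑_{i=0}^∞ γ^i ∫ r_i dP^π_{i+1} and J_Q(π) := ∑_{i=0}^∞ γ^i ∫ r_i dQ^π_{i+1}. If π⋆ ∈ Π attains the supremum of J_P over Π and π_B ∈ Π attains the supremum of J_Q over Π, then J_P(π⋆) − J_P(π_B) ≤ 2 R_max · sup_{π ∈ Π} ∑_{i=0}^∞ (1 − γ) γ^i · TV(P^π_{i+1}, Q^π_{i+1}). -/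

import Mathlib

open MeasureTheory

/-- Total variation distance between two measures:
`TV(P,Q) = sup over measurable sets E of |P(E) - Q(E)|`. -/
noncomputable def tvDist {X : Type*} [MeasurableSpace X] (P Q : Measure X) : ℝ :=
  ⨆ E : {E : Set X // MeasurableSet E}, |(P E.1).toReal - (Q E.1).toReal|

section aux
variable {X : Type*} [MeasurableSpace X] (P Q : Measure X)
  [IsProbabilityMeasure P] [IsProbabilityMeasure Q]

lemma toReal_le_one' (E : Set X) : (P E).toReal ≤ 1 := by
  have := prob_le_one (μ := P) (s := E)
  simpa using ENNReal.toReal_mono (by simp) this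

lemma tv_bdd : BddAbove (Set.range fun E : {E : Set X // MeasurableSet E} =>
    |(P E.1).toReal - (Q E.1).toReal|) := by
  refine ⟨2, ?_⟩
  rintro x ⟨E, rfl⟩
  have h1 := toReal_le_one' P E.1
  have h2 := toReal_le_one' Q E.1
  have h3 : (0:ℝ) ≤ (P E.1).toReal := ENNReal.toReal_nonneg
  have h4 : (0:ℝ) ≤ (Q E.1).toReal := ENNReal.toReal_nonneg
  rw [abs_sub_le_iff]; constructor <;> linarith

lemma abs_measure_sub_le_tvDist {E : Set X} (hE : MeasurableSet E) :
    |(P E).toReal - (Q E).toReal| ≤ tvDist P Q :=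
  le_ciSup (tv_bdd P Q) (⟨E, hE⟩ : {E : Set X // MeasurableSet E})

lemma tvDist_nonneg : 0 ≤ tvDist P Q :=
  le_trans (abs_nonneg _) (abs_measure_sub_le_tvDist P Q MeasurableSet.empty)

lemma tvDist_le_two : tvDist P Q ≤ 2 :=
  ciSup_le fun E => by
    have h1 := toReal_le_one' P E.1
    have h2 := toReal_le_one' Q E.1
    have h3 : (0:ℝ) ≤ (P E.1).toReal := ENNReal.toReal_nonneg
    have h4 : (0:ℝ) ≤ (Q E.1).toReal := ENNReal.toReal_nonneg
    rw [abs_sub_le_iff]; constructor <;> linarith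

lemma integrable_of_bdd {f : X → ℝ} (hf : Measurable f) {a b : ℝ}
    (hab : ∀ x, a ≤ f x ∧ f x ≤ b) : Integrable f P := by
  refine (integrable_const (max |a| |b|)).mono' hf.aestronglyMeasurable ?_
  refine Filter.Eventually.of_forall fun x => ?_
  rw [Real.norm_eq_abs, abs_le]
  constructor
  · linarith [(hab x).1, neg_abs_le a, le_max_left |a| |b|]
  · linarith [(hab x).2, le_abs_self b, le_max_right |a| |b|]

lemma abs_integral_sub_le_tv {f : X → ℝ} (hf : Measurable f) {a b : ℝ} (hba : a ≤ b)
    (hab : ∀ x, a ≤ f x ∧ f x ≤ b) :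
    |(∫ x, f x ∂P) - ∫ x, f x ∂Q| ≤ (b - a) * tvDist P Q := by
  set g : X → ℝ := fun x => f x - a with hg_def
  have hg : Measurable g := hf.sub measurable_const
  have hgnn : ∀ x, 0 ≤ g x := fun x => by simp [hg_def]; linarith [(hab x).1]
  have hgb : ∀ x, g x ≤ b - a := fun x => by simp [hg_def]; linarith [(hab x).2]
  have hfP : Integrable f P := integrable_of_bdd P hf hab
  have hfQ : Integrable f Q := integrable_of_bdd Q hf hab
  have hgP : Integrable g P := hfP.sub (integrable_const a)
  have hgQ : Integrable g Q := hfQ.sub (integrable_const a)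
  have hIP : ∫ x, g x ∂P = (∫ x, f x ∂P) - a := by
    rw [hg_def]
    rw [integral_sub hfP (integrable_const a), integral_const]
    simp
  have hIQ : ∫ x, g x ∂Q = (∫ x, f x ∂Q) - a := by
    rw [hg_def]
    rw [integral_sub hfQ (integrable_const a), integral_const]
    simp
  have key : (∫ x, f x ∂P) - ∫ x, f x ∂Q = (∫ x, g x ∂P) - ∫ x, g x ∂Q := by
    rw [hIP, hIQ]; ring
  have layerP : ∫ x, g x ∂P =
      ∫ t in Set.Ioc 0 (b - a), ((P {x | t ≤ g x}).toReal) :=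
    hgP.integral_eq_integral_Ioc_meas_le (Filter.Eventually.of_forall hgnn)
      (Filter.Eventually.of_forall hgb)
  have layerQ : ∫ x, g x ∂Q =
      ∫ t in Set.Ioc 0 (b - a), ((Q {x | t ≤ g x}).toReal) :=
    hgQ.integral_eq_integral_Ioc_meas_le (Filter.Eventually.of_forall hgnn)
      (Filter.Eventually.of_forall hgb)
  have measP : Measurable fun t : ℝ => (P {x | t ≤ g x}).toReal := by
    apply Measurable.ennreal_toReal
    exact Antitone.measurable fun s t hst =>
      measure_mono fun x hx => le_trans hst hx
  have measQ : Measurable fun t : ℝ => (Q {x | t ≤ g x}).toReal := by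
    apply Measurable.ennreal_toReal
    exact Antitone.measurable fun s t hst =>
      measure_mono fun x hx => le_trans hst hx
  have hsfin : volume (Set.Ioc (0:ℝ) (b - a)) < ⊤ := by
    rw [Real.volume_Ioc]; exact ENNReal.ofReal_lt_top
  have intP : IntegrableOn (fun t : ℝ => (P {x | t ≤ g x}).toReal)
      (Set.Ioc 0 (b - a)) volume := by
    refine Integrable.mono'
      ((integrableOn_const hsfin.ne) :
        IntegrableOn (fun _ : ℝ => (1:ℝ)) (Set.Ioc 0 (b - a)) volume)
      measP.aestronglyMeasurable ?_
    refine Filter.Eventually.of_forall fun t => ?_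
    rw [Real.norm_eq_abs, abs_of_nonneg ENNReal.toReal_nonneg]
    exact toReal_le_one' P _
  have intQ : IntegrableOn (fun t : ℝ => (Q {x | t ≤ g x}).toReal)
      (Set.Ioc 0 (b - a)) volume := by
    refine Integrable.mono'
      ((integrableOn_const hsfin.ne) :
        IntegrableOn (fun _ : ℝ => (1:ℝ)) (Set.Ioc 0 (b - a)) volume)
      measQ.aestronglyMeasurable ?_
    refine Filter.Eventually.of_forall fun t => ?_
    rw [Real.norm_eq_abs, abs_of_nonneg ENNReal.toReal_nonneg]
    exact toReal_le_one' Q _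
  rw [key, layerP, layerQ, ← integral_sub intP intQ]
  have hb : ‖∫ t in Set.Ioc (0:ℝ) (b - a),
      ((P {x | t ≤ g x}).toReal - (Q {x | t ≤ g x}).toReal)‖ ≤
      tvDist P Q * (volume (Set.Ioc (0:ℝ) (b - a))).toReal := by
    refine norm_setIntegral_le_of_norm_le_const hsfin fun t _ => ?_
    rw [Real.norm_eq_abs]
    exact abs_measure_sub_le_tvDist P Q (measurableSet_le measurable_const hg)
  rw [Real.norm_eq_abs] at hb
  refine le_trans hb ?_
  rw [Real.volume_Ioc, ENNReal.toReal_ofReal (by linarith)]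
  rw [mul_comm]
  simp

end aux

/-- Regret bound via total variation: if `π⋆` maximises `J_P` and `π_B` maximises `J_Q`,
where `J_P(π) = ∑ γ^i ∫ r_i dP^π_{i+1}` and `J_Q(π) = ∑ γ^i ∫ r_i dQ^π_{i+1}` with rewards in
`[r_min, r_max]`, then
`J_P(π⋆) − J_P(π_B) ≤ 2 R_max sup_π ∑ (1−γ) γ^i TV(P^π_{i+1}, Q^π_{i+1})`. -/
theorem regret_le_tv {Pol : Type*} [Nonempty Pol]
    {H : ℕ → Type*} [∀ i, MeasurableSpace (H i)]
    (γ : ℝ) (hγ : γ ∈ Set.Ico (0 : ℝ) 1)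
    (rmin rmax : ℝ) (hr : rmin ≤ rmax)
    (P Q : Pol → ∀ i, Measure (H i))
    [∀ π i, IsProbabilityMeasure (P π i)] [∀ π i, IsProbabilityMeasure (Q π i)]
    (r : ∀ i, H (i + 1) → ℝ) (hmeas : ∀ i, Measurable (r i))
    (hbound : ∀ i x, rmin ≤ r i x ∧ r i x ≤ rmax)
    (JP JQ : Pol → ℝ)
    (hJP : ∀ π, JP π = ∑' i, γ ^ i * ∫ x, r i x ∂(P π (i + 1)))
    (hJQ : ∀ π, JQ π = ∑' i, γ ^ i * ∫ x, r i x ∂(Q π (i + 1)))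
    (πs πB : Pol)
    (hπs : ∀ π, JP π ≤ JP πs) (hπB : ∀ π, JQ π ≤ JQ πB) :
    JP πs - JP πB ≤ 2 * ((rmax - rmin) / (1 - γ)) *
      ⨆ π, ∑' i, (1 - γ) * γ ^ i * tvDist (P π (i + 1)) (Q π (i + 1)) := by
  obtain ⟨hγ0, hγ1⟩ := hγ
  have h1γ : (0:ℝ) < 1 - γ := by linarith
  set R : ℝ := (rmax - rmin) / (1 - γ) with hR
  have hR0 : 0 ≤ R := div_nonneg (by linarith) (le_of_lt h1γ)
  set S : Pol → ℝ := fun π => ∑' i, (1 - γ) * γ ^ i * tvDist (P π (i + 1)) (Q π (i + 1))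
    with hS
  have hgeo : Summable (fun i : ℕ => γ ^ i) := summable_geometric_of_lt_one hγ0 hγ1
  have htv0 : ∀ π i, 0 ≤ tvDist (P π (i + 1)) (Q π (i + 1)) :=
    fun π i => tvDist_nonneg _ _
  have htv2 : ∀ π i, tvDist (P π (i + 1)) (Q π (i + 1)) ≤ 2 :=
    fun π i => tvDist_le_two _ _
  have hSsum : ∀ π, Summable (fun i : ℕ =>
      (1 - γ) * γ ^ i * tvDist (P π (i + 1)) (Q π (i + 1))) := by
    intro π
    refine Summable.of_nonneg_of_le
      (fun i => mul_nonneg (mul_nonneg (by linarith) (pow_nonneg hγ0 i)) (htv0 π i))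
      (fun i => ?_) ((hgeo.mul_left ((1 - γ) * 2)))
    calc (1 - γ) * γ ^ i * tvDist (P π (i + 1)) (Q π (i + 1))
        ≤ (1 - γ) * γ ^ i * 2 := by
          exact mul_le_mul_of_nonneg_left (htv2 π i)
            (mul_nonneg (by linarith) (pow_nonneg hγ0 i))
      _ = (1 - γ) * 2 * γ ^ i := by ring
  -- boundedness of S
  have hSb : BddAbove (Set.range S) := by
    refine ⟨2, ?_⟩
    rintro x ⟨π, rfl⟩
    have : S π ≤ ∑' i : ℕ, (1 - γ) * 2 * γ ^ i := by
      refine Summable.tsum_le_tsum (fun i => ?_) (hSsum π) (hgeo.mul_left _)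
      calc (1 - γ) * γ ^ i * tvDist (P π (i + 1)) (Q π (i + 1))
          ≤ (1 - γ) * γ ^ i * 2 := by
            exact mul_le_mul_of_nonneg_left (htv2 π i)
              (mul_nonneg (by linarith) (pow_nonneg hγ0 i))
        _ = (1 - γ) * 2 * γ ^ i := by ring
    refine le_trans this ?_
    rw [tsum_mul_left, tsum_geometric_of_lt_one hγ0 hγ1]
    have heq : (1 - γ) * 2 * (1 - γ)⁻¹ = 2 := by
      field_simp
    linarith [heq]
  -- summability of the value series
  set C : ℝ := max |rmin| |rmax| with hC
  have habs : ∀ {μ : Measure (H 1)}, True := fun {_} => trivial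
  have hint_bound : ∀ (i : ℕ) (μ : Measure (H (i+1))) [IsProbabilityMeasure μ],
      |∫ x, r i x ∂μ| ≤ C := by
    intro i μ hμ
    have := norm_integral_le_of_norm_le_const (μ := μ) (f := r i) (C := C)
      (Filter.Eventually.of_forall fun x => by
        rw [Real.norm_eq_abs, abs_le]
        constructor
        · linarith [(hbound i x).1, neg_abs_le rmin, le_max_left |rmin| |rmax|]
        · linarith [(hbound i x).2, le_abs_self rmax, le_max_right |rmin| |rmax|])
    simpa using this
  have hsumP : ∀ π, Summable (fun i : ℕ => γ ^ i * ∫ x, r i x ∂(P π (i + 1))) := by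
    intro π
    refine Summable.of_norm_bounded (g := fun i => C * γ ^ i) (hgeo.mul_left C) fun i => ?_
    rw [norm_mul, Real.norm_eq_abs, Real.norm_eq_abs, abs_pow, abs_of_nonneg hγ0]
    calc γ ^ i * |∫ x, r i x ∂(P π (i + 1))| ≤ γ ^ i * C := by
          apply mul_le_mul_of_nonneg_left (hint_bound i _) (by positivity)
      _ = C * γ ^ i := by ring
  have hsumQ : ∀ π, Summable (fun i : ℕ => γ ^ i * ∫ x, r i x ∂(Q π (i + 1))) := by
    intro π
    refine Summable.of_norm_bounded (g := fun i => C * γ ^ i) (hgeo.mul_left C) fun i => ?_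
    rw [norm_mul, Real.norm_eq_abs, Real.norm_eq_abs, abs_pow, abs_of_nonneg hγ0]
    calc γ ^ i * |∫ x, r i x ∂(Q π (i + 1))| ≤ γ ^ i * C := by
          apply mul_le_mul_of_nonneg_left (hint_bound i _) (by positivity)
      _ = C * γ ^ i := by ring
  -- main per-policy bound
  have hmain : ∀ π, |JP π - JQ π| ≤ R * S π := by
    intro π
    rw [hJP, hJQ, ← Summable.tsum_sub (hsumP π) (hsumQ π)]
    have hterm : ∀ i : ℕ,
        ‖γ ^ i * (∫ x, r i x ∂(P π (i + 1))) - γ ^ i * (∫ x, r i x ∂(Q π (i + 1)))‖ ≤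
        R * ((1 - γ) * γ ^ i * tvDist (P π (i + 1)) (Q π (i + 1))) := by
      intro i
      have h1 : |(∫ x, r i x ∂(P π (i + 1))) - ∫ x, r i x ∂(Q π (i + 1))| ≤
          (rmax - rmin) * tvDist (P π (i + 1)) (Q π (i + 1)) :=
        abs_integral_sub_le_tv _ _ (hmeas i) hr (hbound i)
      have : γ ^ i * (∫ x, r i x ∂(P π (i + 1))) - γ ^ i * (∫ x, r i x ∂(Q π (i + 1)))
          = γ ^ i * ((∫ x, r i x ∂(P π (i + 1))) - ∫ x, r i x ∂(Q π (i + 1))) := by ring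
      rw [this, Real.norm_eq_abs, abs_mul, abs_pow, abs_of_nonneg hγ0]
      have h2 : γ ^ i * |(∫ x, r i x ∂(P π (i + 1))) - ∫ x, r i x ∂(Q π (i + 1))| ≤
          γ ^ i * ((rmax - rmin) * tvDist (P π (i + 1)) (Q π (i + 1))) :=
        mul_le_mul_of_nonneg_left h1 (by positivity)
      refine le_trans h2 (le_of_eq ?_)
      rw [hR]
      field_simp
    have hsumdiff : Summable (fun i : ℕ =>
        γ ^ i * (∫ x, r i x ∂(P π (i + 1))) - γ ^ i * (∫ x, r i x ∂(Q π (i + 1)))) :=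
      (hsumP π).sub (hsumQ π)
    have habs_le := norm_tsum_le_tsum_norm (f := fun i : ℕ =>
        γ ^ i * (∫ x, r i x ∂(P π (i + 1))) - γ ^ i * (∫ x, r i x ∂(Q π (i + 1))))
      (Summable.of_nonneg_of_le (fun i => norm_nonneg _) hterm ((hSsum π).mul_left R))
    rw [Real.norm_eq_abs] at habs_le
    refine le_trans habs_le ?_
    have := Summable.tsum_le_tsum hterm
      (Summable.of_nonneg_of_le (fun i => norm_nonneg _) hterm ((hSsum π).mul_left R))
      ((hSsum π).mul_left R)
    refine le_trans this (le_of_eq ?_)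
    rw [tsum_mul_left]
  -- finish
  have hsup : ∀ π, S π ≤ ⨆ π', S π' := fun π => le_ciSup hSb π
  have h1 : JP πs - JQ πs ≤ R * S πs := le_trans (le_abs_self _) (hmain πs)
  have h2 : JQ πB - JP πB ≤ R * S πB := by
    have := hmain πB
    rw [abs_sub_comm] at this
    exact le_trans (le_abs_self _) this
  have h3 : JQ πs ≤ JQ πB := hπB πs
  have h4 : R * S πs ≤ R * ⨆ π', S π' := mul_le_mul_of_nonneg_left (hsup πs) hR0
  have h5 : R * S πB ≤ R * ⨆ π', S π' := mul_le_mul_of_nonneg_left (hsup πB) hR0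
  have : JP πs - JP πB = (JP πs - JQ πs) + (JQ πs - JQ πB) + (JQ πB - JP πB) := by ring
  rw [this]
  have hfin : (JP πs - JQ πs) + (JQ πs - JQ πB) + (JQ πB - JP πB) ≤
      R * (⨆ π', S π') + 0 + R * (⨆ π', S π') := by
    have hA := le_trans h1 h4
    have hB := le_trans h2 h5
    linarith
  refine le_trans hfin (le_of_eq ?_)
  ring
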